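/- arXiv:2602.20364 — 2 statements merged into one kernel-verified Lean document; each statement's English description precedes it below -/
import Mathlib

section
/- Let $G$ be a totally disconnected locally compact group and $(\pi, V)$ a smooth admissible representation of $G$ over $\mathbb{C}$. Let $\|\cdot\|$ be a norm on $V$ with respect to which $\pi$ is continuous, and let $(\widetilde\pi, \widetilde V)$ denote the extension of $\pi$ to the completion $\widetilde V$ of $V$ with respect to this norm. Then for every compact open subgroup $K$ of $G$, the space of $K$-fixed vectors satisfies $\widetilde{V}^K = V^K$. -/
open UniformSpace

noncomputable section

namespace SmoothRep

variable {G : Type} [Group G] [TopologicalSpace G] [IsTopologicalGroup G]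
  [LocallyCompactSpace G] [TotallyDisconnectedSpace G]
  {V : Type} [NormedAddCommGroup V] [NormedSpace ℂ V]

/-- The submodule of `K`-fixed vectors of a representation. -/
def fixedSubmodule (π : Representation ℂ G V) (K : Subgroup G) : Submodule ℂ V where
  carrier := {v : V | ∀ k ∈ K, π k v = v}
  add_mem' := by
    intro a b ha hb k hk
    simp [map_add, ha k hk, hb k hk]
  zero_mem' := by
    intro k hk
    simp
  smul_mem' := by
    intro c v hv k hk
    simp [map_smul, hv k hk]

/-- A representation is smooth if every vector has open stabiliser. -/
def IsSmooth (π : Representation ℂ G V) : Prop :=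
  ∀ v : V, IsOpen {g : G | π g v = v}

/-- A representation is admissible if the fixed vectors of every compact open subgroup form a
finite-dimensional subspace. -/
def IsAdmissible (π : Representation ℂ G V) : Prop :=
  ∀ K : Subgroup G, IsCompact (K : Set G) → IsOpen (K : Set G) →
    FiniteDimensional ℂ (fixedSubmodule π K)

set_option maxHeartbeats 1000000
set_option linter.unusedSectionVars false

set_option linter.unusedSectionVars false in
lemma norm_apply_le (π : Representation ℂ G V)
    (πt : G → (Completion V →L[ℂ] Completion V))
    (hcompat : ∀ (g : G) (v : V), πt g (↑v : Completion V) = (↑(π g v) : Completion V))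
    (g : G) (v : V) : ‖π g v‖ ≤ ‖πt g‖ * ‖v‖ := by
  have h1 : ‖(↑(π g v) : Completion V)‖ = ‖π g v‖ := Completion.norm_coe _
  rw [← h1, ← hcompat]
  calc ‖πt g (↑v : Completion V)‖ ≤ ‖πt g‖ * ‖(↑v : Completion V)‖ := (πt g).le_opNorm _
  _ = ‖πt g‖ * ‖v‖ := by rw [Completion.norm_coe]

lemma uniform_bound (π : Representation ℂ G V)
    (hcont : ∀ v : V, Continuous fun g : G => π g v)
    (πt : G → (Completion V →L[ℂ] Completion V))
    (hcompat : ∀ (g : G) (v : V), πt g (↑v : Completion V) = (↑(π g v) : Completion V))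
    (K : Subgroup G) (hKcompact : IsCompact (K : Set G)) (hKopen : IsOpen (K : Set G)) :
    ∃ C : ℝ, 0 ≤ C ∧ ∀ k ∈ K, ∀ v : V, ‖π k v‖ ≤ C * ‖v‖ := by
  haveI : T2Space G := by
    have h := (totallyDisconnectedSpace_iff_connectedComponent_singleton.mp ‹_›) (1 : G)
    have h1 : IsClosed ({1} : Set G) := by rw [← h]; exact isClosed_connectedComponent
    exact IsTopologicalGroup.t2Space_iff_one_closed.mpr h1
  haveI : CompactSpace (K : Set G) := isCompact_iff_compactSpace.mp hKcompact
  haveI : Nonempty (K : Set G) := ⟨⟨1, K.one_mem⟩⟩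
  -- Baire category on K
  let B : ℕ → Set (K : Set G) := fun n => ⋂ v : V, {k : (K : Set G) | ‖π k.1 v‖ ≤ n * ‖v‖}
  have hBc : ∀ n, IsClosed (B n) := by
    intro n
    refine isClosed_iInter fun v => isClosed_le ?_ continuous_const
    exact ((hcont v).comp continuous_subtype_val).norm
  have hBU : ⋃ n, B n = Set.univ := by
    ext k
    simp only [B, Set.mem_iUnion, Set.mem_iInter, Set.mem_setOf_eq, Set.mem_univ, iff_true]
    refine ⟨⌈‖πt k.1‖⌉₊, fun v => ?_⟩
    calc ‖π k.1 v‖ ≤ ‖πt k.1‖ * ‖v‖ := norm_apply_le π πt hcompat _ v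
    _ ≤ (⌈‖πt k.1‖⌉₊ : ℝ) * ‖v‖ :=
        mul_le_mul_of_nonneg_right (Nat.le_ceil _) (norm_nonneg v)
  obtain ⟨n₀, x₀, hx₀⟩ := nonempty_interior_of_iUnion_of_closed hBc hBU
  have hUopen : IsOpen (Subtype.val '' interior (B n₀)) :=
    (hKopen.isOpenEmbedding_subtypeVal).isOpenMap _ isOpen_interior
  have hUbound : ∀ x ∈ Subtype.val '' interior (B n₀), ∀ v : V, ‖π x v‖ ≤ n₀ * ‖v‖ := by
    rintro x ⟨y, hy, rfl⟩ v
    exact Set.mem_iInter.mp (interior_subset hy) v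
  have hk₀U : (x₀ : G) ∈ Subtype.val '' interior (B n₀) := ⟨x₀, hx₀, rfl⟩
  -- cover K by finitely many translates
  obtain ⟨t, ht⟩ := hKcompact.elim_finite_subcover
      (fun g : (K : Set G) => (fun x : G => (x₀ : G) * (g.1⁻¹ * x)) ⁻¹' (Subtype.val '' interior (B n₀)))
      (fun g => hUopen.preimage (continuous_const.mul (continuous_const.mul continuous_id)))
      (by
        intro k hk
        refine Set.mem_iUnion.mpr ⟨⟨k, hk⟩, ?_⟩
        simp only [Set.mem_preimage, inv_mul_cancel, mul_one]
        exact hk₀U)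
  refine ⟨(∑ g ∈ t, ‖πt g.1‖) * (‖πt (x₀ : G)⁻¹‖ * n₀), ?_, ?_⟩
  · have h1 : (0:ℝ) ≤ ∑ g ∈ t, ‖πt g.1‖ :=
      Finset.sum_nonneg fun g _ => norm_nonneg _
    positivity
  · intro k hk v
    obtain ⟨g, hgt, hgk⟩ := Set.mem_iUnion₂.mp (ht hk)
    rw [Set.mem_preimage] at hgk
    have hkey : k = g.1 * ((x₀ : G)⁻¹ * ((x₀ : G) * (g.1⁻¹ * k))) := by group
    have happ : π k v = π g.1 (π (x₀ : G)⁻¹ (π ((x₀ : G) * (g.1⁻¹ * k)) v)) := by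
      conv_lhs => rw [hkey]
      rw [map_mul, map_mul, Module.End.mul_apply, Module.End.mul_apply]
    rw [happ]
    have h1 : ‖π ((x₀ : G) * (g.1⁻¹ * k)) v‖ ≤ n₀ * ‖v‖ := hUbound _ hgk v
    have h2 : ‖π (x₀ : G)⁻¹ (π ((x₀ : G) * (g.1⁻¹ * k)) v)‖ ≤ ‖πt (x₀ : G)⁻¹‖ * (n₀ * ‖v‖) := by
      calc ‖π (x₀ : G)⁻¹ (π ((x₀ : G) * (g.1⁻¹ * k)) v)‖
          ≤ ‖πt (x₀ : G)⁻¹‖ * ‖π ((x₀ : G) * (g.1⁻¹ * k)) v‖ := norm_apply_le π πt hcompat _ _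
        _ ≤ ‖πt (x₀ : G)⁻¹‖ * (n₀ * ‖v‖) := mul_le_mul_of_nonneg_left h1 (norm_nonneg _)
    have h3 : ‖πt g.1‖ ≤ ∑ g' ∈ t, ‖πt g'.1‖ :=
      Finset.single_le_sum (f := fun g' : (K : Set G) => ‖πt g'.1‖) (fun g' _ => norm_nonneg _) hgt
    calc ‖π g.1 (π (x₀ : G)⁻¹ (π ((x₀ : G) * (g.1⁻¹ * k)) v))‖
        ≤ ‖πt g.1‖ * ‖π (x₀ : G)⁻¹ (π ((x₀ : G) * (g.1⁻¹ * k)) v)‖ := norm_apply_le π πt hcompat _ _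
      _ ≤ ‖πt g.1‖ * (‖πt (x₀ : G)⁻¹‖ * (n₀ * ‖v‖)) :=
          mul_le_mul_of_nonneg_left h2 (norm_nonneg _)
      _ ≤ (∑ g' ∈ t, ‖πt g'.1‖) * (‖πt (x₀ : G)⁻¹‖ * (n₀ * ‖v‖)) := by
          refine mul_le_mul_of_nonneg_right h3 ?_
          positivity
      _ = (∑ g' ∈ t, ‖πt g'.1‖) * (‖πt (x₀ : G)⁻¹‖ * ↑n₀) * ‖v‖ := by ring

/-- **Proposition.** Let `G` be a tdlc group and `(π, V)` a smooth admissible representation of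
`G`, continuous with respect to a norm on `V`, and let `(π̃, Ṽ)` be the extension of `π` to the
completion `Ṽ` of `V`. Then for every compact open subgroup `K ≤ G` one has `Ṽ^K = V^K`. -/
theorem completion_fixed_vectors
    (π : Representation ℂ G V)
    (hsmooth : IsSmooth π) (hadm : IsAdmissible π)
    (hcont : ∀ v : V, Continuous fun g : G => π g v)
    (πt : G → (Completion V →L[ℂ] Completion V))
    (hcompat : ∀ (g : G) (v : V), πt g (↑v : Completion V) = (↑(π g v) : Completion V))
    (K : Subgroup G) (hKcompact : IsCompact (K : Set G)) (hKopen : IsOpen (K : Set G)) :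
    {w : Completion V | ∀ k ∈ K, πt k w = w}
      = (fun v : V => (↑v : Completion V)) '' {v : V | ∀ k ∈ K, π k v = v} := by
  classical
  obtain ⟨C, hC0, hC⟩ := uniform_bound π hcont πt hcompat K hKcompact hKopen
  have hCc : ∀ k ∈ K, ∀ u : Completion V, ‖πt k u‖ ≤ C * ‖u‖ := by
    intro k hk u
    refine Completion.induction_on u ?_ ?_
    · exact isClosed_le ((πt k).continuous.norm) (continuous_const.mul continuous_norm)
    · intro v
      rw [hcompat, Completion.norm_coe, Completion.norm_coe]
      exact hC k hk v
  have hinj : ∀ k : G, Function.Injective ⇑(π k) := by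
    intro k a b h
    have h2 : π k⁻¹ (π k a) = π k⁻¹ (π k b) := congrArg _ h
    rwa [← Module.End.mul_apply, ← Module.End.mul_apply, ← map_mul, inv_mul_cancel, map_one,
      Module.End.one_apply, Module.End.one_apply] at h2
  have hL : ∀ z : V, (Completion.toComplL : V →L[ℂ] Completion V) z = (↑z : Completion V) :=
    fun z => by simp [Completion.coe_toComplL]
  ext w
  simp only [Set.mem_setOf_eq, Set.mem_image]
  constructor
  · intro hw
    haveI := hadm K hKcompact hKopen
    have hSclosed : IsClosed
        (((fixedSubmodule π K).map
          (Completion.toComplL : V →L[ℂ] Completion V).toLinearMap : Submodule ℂ (Completion V))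
          : Set (Completion V)) := by
      haveI : FiniteDimensional ℂ
          ((fixedSubmodule π K).map
            (Completion.toComplL : V →L[ℂ] Completion V).toLinearMap) :=
        Module.Finite.map _ _
      exact Submodule.closed_of_finiteDimensional _
    have hwS : w ∈ closure
        (((fixedSubmodule π K).map
          (Completion.toComplL : V →L[ℂ] Completion V).toLinearMap : Submodule ℂ (Completion V))
          : Set (Completion V)) := by
      rw [Metric.mem_closure_iff]
      intro ε hε
      have hC1 : (0:ℝ) < C + 1 := by linarith
      obtain ⟨v, hv⟩ := Metric.denseRange_iff.mp Completion.denseRange_coe w (ε / (C + 1))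
        (by positivity)
      -- cover K by finitely many translates of the stabiliser of v
      obtain ⟨t, ht⟩ := hKcompact.elim_finite_subcover
        (fun g : (K : Set G) => (fun x : G => g.1⁻¹ * x) ⁻¹' {g' : G | π g' v = v})
        (fun g => (hsmooth v).preimage (continuous_const.mul continuous_id))
        (by
          intro k hk
          refine Set.mem_iUnion.mpr ⟨⟨k, hk⟩, ?_⟩
          simp only [Set.mem_preimage, inv_mul_cancel, Set.mem_setOf_eq, map_one,
            Module.End.one_apply])
      have horbit : ∀ k ∈ K, ∃ g ∈ t, π k v = π g.1 v := by
        intro k hk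
        obtain ⟨g, hgt, hgk⟩ := Set.mem_iUnion₂.mp (ht hk)
        rw [Set.mem_preimage, Set.mem_setOf_eq] at hgk
        refine ⟨g, hgt, ?_⟩
        have h5 : k = g.1 * (g.1⁻¹ * k) := by group
        conv_lhs => rw [h5]
        rw [map_mul, Module.End.mul_apply, hgk]
      set O : Finset V := t.image (fun g => π g.1 v) with hO
      have hmemO : ∀ k ∈ K, π k v ∈ O := by
        intro k hk
        obtain ⟨g, hgt, he⟩ := horbit k hk
        rw [he]
        exact Finset.mem_image_of_mem _ hgt
      have hONon : O.Nonempty := ⟨π (1:G) v, hmemO 1 K.one_mem⟩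
      have hN : 0 < O.card := Finset.card_pos.mpr hONon
      have hNC : ((O.card : ℂ)) ≠ 0 := Nat.cast_ne_zero.mpr hN.ne'
      set u : V := (O.card : ℂ)⁻¹ • ∑ x ∈ O, x with hu
      have hperm : ∀ k ∈ K, O.image (fun x => π k x) = O := by
        intro k hk
        refine Finset.eq_of_subset_of_card_le ?_ ?_
        · intro y hy
          obtain ⟨x, hx, rfl⟩ := Finset.mem_image.mp hy
          obtain ⟨g, hgt, rfl⟩ := Finset.mem_image.mp hx
          rw [← Module.End.mul_apply, ← map_mul]
          exact hmemO _ (K.mul_mem hk g.2)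
        · rw [Finset.card_image_of_injective _ (hinj k)]
      have hufix : ∀ k ∈ K, π k u = u := by
        intro k hk
        rw [hu, map_smul, map_sum]
        congr 1
        conv_rhs => rw [← hperm k hk]
        exact (Finset.sum_image (s := O) (g := fun x : V => π k x) (f := fun y : V => y) (fun a _ b _ h => hinj k h)).symm
      -- the average approximates w
      have hterm : ∀ x ∈ O, ‖(x : Completion V) - w‖ ≤ C * ‖(v : Completion V) - w‖ := by
        intro x hx
        obtain ⟨g, hgt, rfl⟩ := Finset.mem_image.mp hx
        have h6 : ((π g.1 v : V) : Completion V) - w = πt g.1 ((v : Completion V) - w) := by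
          rw [map_sub, hcompat, hw g.1 g.2]
        rw [h6]
        exact hCc g.1 g.2 _
      have hcoeu : ((u : V) : Completion V)
          = (O.card : ℂ)⁻¹ • ∑ x ∈ O, ((x : V) : Completion V) := by
        rw [hu, ← hL, map_smul, map_sum]
        simp only [hL]
      have hdiff : ((u : V) : Completion V) - w
          = (O.card : ℂ)⁻¹ • ∑ x ∈ O, (((x : V) : Completion V) - w) := by
        rw [Finset.sum_sub_distrib, smul_sub, Finset.sum_const, hcoeu]
        congr 1
        rw [← Nat.cast_smul_eq_nsmul ℂ, smul_smul, inv_mul_cancel₀ hNC, one_smul]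
      have hnorm : ‖((u : V) : Completion V) - w‖ ≤ C * ‖(v : Completion V) - w‖ := by
        rw [hdiff, norm_smul]
        have h7 : ‖((O.card : ℂ))⁻¹‖ = ((O.card : ℝ))⁻¹ := by
          rw [norm_inv]
          simp
        rw [h7]
        have h8 : ‖∑ x ∈ O, (((x : V) : Completion V) - w)‖
            ≤ O.card • (C * ‖(v : Completion V) - w‖) := by
          refine le_trans (norm_sum_le _ _) ?_
          exact Finset.sum_le_card_nsmul _ _ _ hterm
        rw [nsmul_eq_mul] at h8
        calc ((O.card : ℝ))⁻¹ * ‖∑ x ∈ O, (((x : V) : Completion V) - w)‖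
            ≤ ((O.card : ℝ))⁻¹ * ((O.card : ℝ) * (C * ‖(v : Completion V) - w‖)) := by
              refine mul_le_mul_of_nonneg_left h8 ?_
              positivity
          _ = C * ‖(v : Completion V) - w‖ := by
              rw [← mul_assoc, inv_mul_cancel₀ (by exact_mod_cast hN.ne' : ((O.card : ℝ)) ≠ 0),
                one_mul]
      refine ⟨(u : Completion V), ?_, ?_⟩
      · exact Submodule.mem_map.mpr ⟨u, hufix, hL u⟩
      · have h9 : dist w ((u : V) : Completion V) = ‖((u : V) : Completion V) - w‖ := by
          rw [dist_comm, dist_eq_norm]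
        have h10 : ‖(v : Completion V) - w‖ < ε / (C + 1) := by
          rw [← dist_eq_norm, dist_comm]
          exact hv
        have h11 : C * ‖(v : Completion V) - w‖ ≤ C * (ε / (C + 1)) :=
          mul_le_mul_of_nonneg_left h10.le hC0
        have h12 : C * (ε / (C + 1)) < ε := by
          rw [mul_div_assoc']
          rw [div_lt_iff₀ hC1]
          nlinarith
        rw [h9]
        linarith [hnorm]
    rw [hSclosed.closure_eq] at hwS
    obtain ⟨u₀, hu₀, hu₀w⟩ := Submodule.mem_map.mp hwS
    exact ⟨u₀, hu₀, by rw [← hu₀w]; exact hL u₀⟩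
  · rintro ⟨v, hv, rfl⟩ k hk
    rw [hcompat, hv k hk]

end SmoothRep
end
end

section
/- Let $G$ be a totally disconnected locally compact group and $(\pi, V)$ a smooth admissible representation of $G$ over $\mathbb{C}$. Let $\|\cdot\|$ be a norm on $V$ with respect to which $\pi$ is continuous, and let $(\widetilde\pi, \widetilde V)$ denote the extension of $\pi$ to the completion of $V$ with respect to this norm. Then the subspace of smooth vectors of $\widetilde V$ equals $V$, that is, $\widetilde{V}^\infty = \bigcup_K \widetilde{V}^K = V$ where the union runs over all compact open subgroups $K$ of $G$. -/
open UniformSpace Set Filter Topology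
open scoped Pointwise

noncomputable section

namespace SmoothRep

variable {G : Type} [Group G] [TopologicalSpace G] [IsTopologicalGroup G]
  [LocallyCompactSpace G] [TotallyDisconnectedSpace G]
  {V : Type} [NormedAddCommGroup V] [NormedSpace ℂ V]

theorem t2space_of_td : T2Space G := by
  refine IsTopologicalGroup.t2Space_iff_one_closed.mpr ?_
  have h := isClosed_connectedComponent (x := (1 : G))
  rwa [totallyDisconnectedSpace_iff_connectedComponent_singleton.mp ‹_› 1] at h

/-- van Dantzig: every neighbourhood of 1 contains a compact open subgroup. -/
theorem exists_compact_open_subgroup {U : Set G} (hUo : IsOpen U) (h1U : (1 : G) ∈ U) :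
    ∃ K : Subgroup G, IsCompact (K : Set G) ∧ IsOpen (K : Set G) ∧ (K : Set G) ⊆ U := by
  have ht2 : T2Space G := t2space_of_td
  obtain ⟨s, hscomp, h1s, hsU⟩ := exists_compact_subset hUo h1U
  obtain ⟨W, hWclopen, h1W, hWsub⟩ :=
    (loc_compact_Haus_tot_disc_of_zero_dim (H := G)).mem_nhds_iff.mp
      (isOpen_interior.mem_nhds h1s)
  have hWcomp : IsCompact W := hscomp.of_isClosed_subset hWclopen.1 (hWsub.trans interior_subset)
  have hWU : W ⊆ U := (hWsub.trans interior_subset).trans hsU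
  -- step 1: find T ∈ 𝓝 1 with W * T ⊆ W
  have exist_T : ∃ T ∈ 𝓝 (1 : G), W * T ⊆ W := by
    apply hWcomp.induction_on (p := fun S ↦ ∃ T ∈ 𝓝 (1 : G), S * T ⊆ W)
      ⟨Set.univ, by simp only [univ_mem, empty_mul, empty_subset, and_self]⟩
      (fun _ _ huv ⟨T, hT, mem⟩ ↦ ⟨T, hT, (mul_subset_mul_right huv).trans mem⟩)
      fun U V ⟨T₁, hT₁, mem1⟩ ⟨T₂, hT₂, mem2⟩ ↦ ⟨T₁ ∩ T₂, inter_mem hT₁ hT₂, by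
        rw [union_mul]
        exact union_subset (mul_subset_mul_left inter_subset_left |>.trans mem1)
          (mul_subset_mul_left inter_subset_right |>.trans mem2)⟩
    intro x memW
    have : (x, 1) ∈ (fun p : G × G ↦ p.1 * p.2) ⁻¹' W := by simp [memW]
    rcases isOpen_prod_iff.mp (continuous_mul.isOpen_preimage W <| hWclopen.2) x 1 this with
      ⟨U', V', Uopen, Vopen, xmemU, onememV, prodsub⟩
    have h6 : U' * V' ⊆ W := mul_subset_iff.mpr (fun _ hx _ hy ↦ prodsub (mk_mem_prod hx hy))
    exact ⟨U' ∩ W, ⟨U', Uopen.mem_nhds xmemU, W, fun _ a ↦ a, rfl⟩,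
      V', IsOpen.mem_nhds Vopen onememV, fun _ a ↦ h6 ((mul_subset_mul_right inter_subset_left) a)⟩
  -- step 2: shrink it to an open symmetric T
  obtain ⟨S, Smemnhds, mulclose⟩ := exist_T
  rcases mem_nhds_iff.mp Smemnhds with ⟨U', UsubS, Uopen, onememU⟩
  set T : Set G := U' ∩ U'⁻¹ with hT
  have hTnhd : T ∈ 𝓝 (1 : G) := by
    simp [hT, Uopen.mem_nhds onememU, inv_mem_nhds_one]
  have hTinv : T⁻¹ = T := by simp [hT, inter_comm]
  have hTopen : IsOpen T := Uopen.inter Uopen.inv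
  have hTmul : W * T ⊆ W :=
    fun a ha ↦ mulclose (mul_subset_mul_left UsubS (mul_subset_mul_left inter_subset_left ha))
  -- step 3: the subgroup generated is open, and contained in W
  let K : Subgroup G := {
    carrier := ⋃ n, T ^ (n + 1)
    mul_mem' := fun ha hb ↦ by
      rcases mem_iUnion.mp ha with ⟨k, hk⟩
      rcases mem_iUnion.mp hb with ⟨l, hl⟩
      apply mem_iUnion.mpr
      use k + 1 + l
      rw [add_assoc, pow_add]
      exact Set.mul_mem_mul hk hl
    one_mem' := by
      apply mem_iUnion.mpr
      use 0
      simp [mem_of_mem_nhds hTnhd]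
    inv_mem' := fun ha ↦ by
      rcases mem_iUnion.mp ha with ⟨k, hk⟩
      apply mem_iUnion.mpr
      use k
      rw [← hTinv]
      simpa only [inv_pow, Set.mem_inv, inv_inv] using hk }
  have hKopen : IsOpen (K : Set G) := by
    refine isOpen_iUnion (fun n ↦ ?_)
    rw [pow_succ]
    exact hTopen.mul_left
  have mulVpow (n : ℕ) : W * T ^ (n + 1) ⊆ W := by
    induction' n with n ih
    · simp [hTmul]
    · rw [pow_succ, ← mul_assoc]
      exact (Set.mul_subset_mul_right ih).trans hTmul
  have hsubW : (K : Set G) ⊆ W := by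
    have h (n : ℕ) : T ^ (n + 1) ⊆ W * T ^ (n + 1) := by
      intro x xin
      rw [Set.mem_mul]
      exact ⟨1, h1W, x, xin, one_mul x⟩
    exact iUnion_subset fun i a ha ↦ mulVpow i (h i ha)
  have hKclosed : IsClosed (K : Set G) := K.isClosed_of_isOpen hKopen
  exact ⟨K, hWcomp.of_isClosed_subset hKclosed hsubW, hKopen, hsubW.trans hWU⟩


theorem pit_mul (π : Representation ℂ G V)
    (πt : G → (Completion V →L[ℂ] Completion V))
    (hcompat : ∀ (g : G) (v : V), πt g (↑v : Completion V) = (↑(π g v) : Completion V))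
    (g h : G) (x : Completion V) : πt g (πt h x) = πt (g * h) x := by
  have key : (⇑(πt g) ∘ ⇑(πt h)) = ⇑(πt (g * h)) := by
    refine Completion.denseRange_coe.equalizer
      ((πt g).continuous.comp (πt h).continuous) (πt (g * h)).continuous ?_
    funext v
    simp only [Function.comp_apply, hcompat, map_mul, Module.End.mul_apply]
  exact congrFun key x

theorem bound_ext (πt : G → (Completion V →L[ℂ] Completion V)) (g : G) {N : ℝ}
    (h : ∀ v : V, ‖πt g (↑v : Completion V)‖ ≤ N * ‖v‖) (x : Completion V) :
    ‖πt g x‖ ≤ N * ‖x‖ := by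
  refine Completion.induction_on x ?_ ?_
  · exact isClosed_le ((πt g).continuous.norm) (continuous_const.mul continuous_norm)
  · intro a
    simpa [Completion.norm_coe] using h a

/-- Uniform boundedness of `πt` on some compact open subgroup contained in `K`. -/
theorem exists_bound (π : Representation ℂ G V)
    (hcont : ∀ v : V, Continuous fun g : G => π g v)
    (πt : G → (Completion V →L[ℂ] Completion V))
    (hcompat : ∀ (g : G) (v : V), πt g (↑v : Completion V) = (↑(π g v) : Completion V))
    (K : Subgroup G) (hKc : IsCompact (K : Set G)) (hKo : IsOpen (K : Set G)) :
    ∃ K₁ : Subgroup G, IsCompact (K₁ : Set G) ∧ IsOpen (K₁ : Set G) ∧ K₁ ≤ K ∧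
      ∃ C : ℝ, 0 ≤ C ∧ ∀ k ∈ K₁, ∀ x : Completion V, ‖πt k x‖ ≤ C * ‖x‖ := by
  have ht2 : T2Space G := t2space_of_td
  have hcont' : ∀ v : V, Continuous fun g : G => πt g (↑v : Completion V) := by
    intro v
    have : (fun g : G => πt g (↑v : Completion V)) =
        (fun g : G => ((π g v : V) : Completion V)) := funext fun g => hcompat g v
    rw [this]
    have h2 : Continuous ((fun x : V => (x : Completion V)) ∘ (fun g : G => π g v)) :=
      (Completion.continuous_coe V).comp (hcont v)
    exact h2
  -- Baire category on the compact Hausdorff space K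
  haveI : CompactSpace (K : Set G) := isCompact_iff_compactSpace.mp hKc
  haveI : Nonempty (K : Set G) := ⟨⟨1, K.one_mem⟩⟩
  have hBaire := nonempty_interior_of_iUnion_of_closed
    (f := fun N : ℕ => ⋂ v : V, {k : (K : Set G) | ‖πt ↑k (↑v : Completion V)‖ ≤ N * ‖v‖})
    (fun N => isClosed_iInter fun v => isClosed_le
      (((hcont' v).comp continuous_subtype_val).norm) continuous_const)
    (by
      refine iUnion_eq_univ_iff.mpr fun k => ?_
      obtain ⟨N, hN⟩ := exists_nat_ge ‖πt ↑k‖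
      refine ⟨N, mem_iInter.mpr fun v => ?_⟩
      calc ‖πt ↑k (↑v : Completion V)‖ ≤ ‖πt ↑k‖ * ‖(↑v : Completion V)‖ := (πt ↑k).le_opNorm _
        _ ≤ N * ‖v‖ := by
            rw [Completion.norm_coe]
            exact mul_le_mul_of_nonneg_right hN (norm_nonneg _))
  obtain ⟨N, x₀, hx₀⟩ := hBaire
  -- transfer the interior to an open set of G
  have hOopen : IsOpen (Subtype.val '' interior
      (⋂ v : V, {k : (K : Set G) | ‖πt ↑k (↑v : Completion V)‖ ≤ N * ‖v‖})) :=
    hKo.isOpenMap_subtype_val _ isOpen_interior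
  set O := Subtype.val '' interior
      (⋂ v : V, {k : (K : Set G) | ‖πt ↑k (↑v : Completion V)‖ ≤ N * ‖v‖}) with hO
  have hbound : ∀ g ∈ O, ∀ x : Completion V, ‖πt g x‖ ≤ N * ‖x‖ := by
    rintro g ⟨k, hk, rfl⟩ x
    refine bound_ext πt _ (fun v => ?_) x
    exact mem_iInter.mp (interior_subset hk) v
  set g₀ : G := ↑x₀ with hg₀
  have hg₀O : g₀ ∈ O := ⟨x₀, hx₀, rfl⟩
  -- find a compact open subgroup inside (g₀⁻¹ • O) ∩ K
  have hU1 : IsOpen ((fun h : G => g₀ * h) ⁻¹' O ∩ K) :=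
    (hOopen.preimage (continuous_mul_left g₀)).inter hKo
  have h1U1 : (1 : G) ∈ (fun h : G => g₀ * h) ⁻¹' O ∩ K := by
    constructor
    · simpa using hg₀O
    · exact K.one_mem
  obtain ⟨K₁, hK₁c, hK₁o, hK₁sub⟩ := exists_compact_open_subgroup hU1 h1U1
  refine ⟨K₁, hK₁c, hK₁o, fun x hx => (hK₁sub hx).2, ‖πt g₀⁻¹‖ * N, ?_, ?_⟩
  · have hN0 : (0 : ℝ) ≤ N := Nat.cast_nonneg N
    positivity
  · intro k hk x
    have hmem : g₀ * k ∈ O := (hK₁sub hk).1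
    have : πt k x = πt g₀⁻¹ (πt (g₀ * k) x) := by
      rw [pit_mul π πt hcompat, inv_mul_cancel_left]
    rw [this]
    calc ‖πt g₀⁻¹ (πt (g₀ * k) x)‖ ≤ ‖πt g₀⁻¹‖ * ‖πt (g₀ * k) x‖ := (πt g₀⁻¹).le_opNorm _
      _ ≤ ‖πt g₀⁻¹‖ * (N * ‖x‖) :=
          mul_le_mul_of_nonneg_left (hbound _ hmem x) (norm_nonneg _)
      _ = ‖πt g₀⁻¹‖ * N * ‖x‖ := by ring


lemma mem_fixedSubmodule {π : Representation ℂ G V} {K : Subgroup G} {v : V} :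
    v ∈ fixedSubmodule π K ↔ ∀ k ∈ K, π k v = v := Iff.rfl

theorem exists_avg (π : Representation ℂ G V) (hsmooth : IsSmooth π)
    (πt : G → (Completion V →L[ℂ] Completion V))
    (hcompat : ∀ (g : G) (v : V), πt g (↑v : Completion V) = (↑(π g v) : Completion V))
    (K : Subgroup G) (hKc : IsCompact (K : Set G)) (hKo : IsOpen (K : Set G))
    {C : ℝ} (hC : ∀ k ∈ K, ∀ x : Completion V, ‖πt k x‖ ≤ C * ‖x‖)
    {w : Completion V} (hw : ∀ k ∈ K, πt k w = w) (v : V) :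
    ∃ u ∈ fixedSubmodule π K,
      ‖(↑u : Completion V) - w‖ ≤ C * ‖(↑v : Completion V) - w‖ := by
  classical
  -- the stabiliser of `v`
  let H : Subgroup G :=
    { carrier := {g : G | π g v = v}
      one_mem' := by simp
      mul_mem' := by
        intro a b ha hb
        simp only [Set.mem_setOf_eq] at *
        rw [map_mul, Module.End.mul_apply, hb, ha]
      inv_mem' := by
        intro a ha
        simp only [Set.mem_setOf_eq] at *
        have h2 : π a⁻¹ (π a v) = v := by
          rw [← Module.End.mul_apply, ← map_mul, inv_mul_cancel, map_one, Module.End.one_apply]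
        rwa [ha] at h2 }
  have hHopen : IsOpen (H : Set G) := hsmooth v
  haveI : CompactSpace (K : Set G) := isCompact_iff_compactSpace.mp hKc
  set L : Subgroup K := H.subgroupOf K with hLdef
  have hLopen : IsOpen (L : Set K) := Subgroup.subgroupOf_isOpen K H hHopen
  haveI : DiscreteTopology (↥K ⧸ L) := QuotientGroup.discreteTopology hLopen
  haveI : Finite (↥K ⧸ L) := finite_of_compact_of_discrete
  haveI : Fintype (↥K ⧸ L) := Fintype.ofFinite _
  set n : ℕ := Fintype.card (↥K ⧸ L) with hn
  have hnpos : 0 < n := Fintype.card_pos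
  have hnC : (n : ℂ) ≠ 0 := Nat.cast_ne_zero.mpr hnpos.ne'
  have hnR : (n : ℝ) ≠ 0 := Nat.cast_ne_zero.mpr hnpos.ne'
  -- the averaged function on the quotient
  have wd : ∀ a b : ↥K, @Setoid.r _ (QuotientGroup.leftRel L) a b → π (↑a : G) v = π (↑b : G) v := by
    intro a b hab
    have h1 : ((a⁻¹ * b : ↥K) : G) ∈ H :=
      (Subgroup.mem_subgroupOf).mp (QuotientGroup.leftRel_apply.mp hab)
    have h2 : π ((↑a : G)⁻¹ * ↑b) v = v := h1
    have h3 : π (↑a : G) (π ((↑a : G)⁻¹ * (↑b : G)) v) = π (↑b : G) v := by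
      rw [← Module.End.mul_apply, ← map_mul, mul_inv_cancel_left]
    rwa [h2] at h3
  let φ : ↥K ⧸ L → V := fun q => Quotient.liftOn' q (fun k : ↥K => π (↑k : G) v) wd
  have hφ_mk : ∀ z : ↥K, φ (QuotientGroup.mk z) = π (↑z : G) v := fun z => rfl
  have hφ_smul : ∀ (k : ↥K) (q : ↥K ⧸ L), φ (k • q) = π (↑k : G) (φ q) := by
    intro k q
    induction q using QuotientGroup.induction_on with
    | H z =>
      rw [MulAction.Quotient.smul_mk, hφ_mk, hφ_mk]
      show π ((↑(k * z) : G)) v = _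
      rw [Subgroup.coe_mul, map_mul, Module.End.mul_apply]
  have hout : ∀ q : ↥K ⧸ L, φ q = π (↑(Quotient.out q) : G) v := by
    intro q
    conv_lhs => rw [← Quotient.out_eq q]
    exact hφ_mk _
  set u : V := (n : ℂ)⁻¹ • ∑ q : ↥K ⧸ L, φ q with hu
  have hufix : u ∈ fixedSubmodule π K := by
    rw [mem_fixedSubmodule]
    intro k hk
    have reindex : ∑ q : ↥K ⧸ L, φ ((⟨k, hk⟩ : ↥K) • q) = ∑ q : ↥K ⧸ L, φ q :=
      Fintype.sum_equiv (MulAction.toPerm (⟨k, hk⟩ : ↥K)) _ _ (fun q => rfl)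
    calc π k u = (n : ℂ)⁻¹ • ∑ q : ↥K ⧸ L, π k (φ q) := by rw [map_smul, map_sum]
      _ = (n : ℂ)⁻¹ • ∑ q : ↥K ⧸ L, φ ((⟨k, hk⟩ : ↥K) • q) := by
          congr 1
          exact Finset.sum_congr rfl fun q _ => (hφ_smul ⟨k, hk⟩ q).symm
      _ = u := by rw [reindex]
  refine ⟨u, hufix, ?_⟩
  -- now the norm estimate in the completion
  have hcoe : ∀ x : V, (Completion.toComplL (𝕜 := ℂ) (E := V)) x = (↑x : Completion V) :=
    fun x => congrFun Completion.coe_toComplL x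
  have hcoeu : (↑u : Completion V) =
      (n : ℂ)⁻¹ • ∑ q : ↥K ⧸ L, πt (↑(Quotient.out q) : G) (↑v : Completion V) := by
    rw [← hcoe u, hu, map_smul, map_sum]
    congr 1
    refine Finset.sum_congr rfl fun q _ => ?_
    rw [hcoe (φ q), hout q, ← hcompat]
  have hwavg : w = (n : ℂ)⁻¹ • ∑ q : ↥K ⧸ L, πt (↑(Quotient.out q) : G) w := by
    have h1 : ∀ q : ↥K ⧸ L, πt (↑(Quotient.out q) : G) w = w :=
      fun q => hw _ (Quotient.out q).2
    rw [Finset.sum_congr rfl fun q _ => h1 q, Finset.sum_const, Finset.card_univ, ← hn,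
      ← Nat.cast_smul_eq_nsmul ℂ n w, smul_smul, inv_mul_cancel₀ hnC, one_smul]
  have key : (↑u : Completion V) - w =
      (n : ℂ)⁻¹ • ∑ q : ↥K ⧸ L, πt (↑(Quotient.out q) : G) ((↑v : Completion V) - w) := by
    calc (↑u : Completion V) - w
        = (n : ℂ)⁻¹ • ∑ q : ↥K ⧸ L, πt (↑(Quotient.out q) : G) (↑v : Completion V)
          - (n : ℂ)⁻¹ • ∑ q : ↥K ⧸ L, πt (↑(Quotient.out q) : G) w := by
          rw [← hcoeu, ← hwavg]
      _ = (n : ℂ)⁻¹ • ∑ q : ↥K ⧸ L,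
            (πt (↑(Quotient.out q) : G) (↑v : Completion V)
              - πt (↑(Quotient.out q) : G) w) := by
          rw [← smul_sub, Finset.sum_sub_distrib]
      _ = _ := by
          congr 1
          exact Finset.sum_congr rfl fun q _ => (map_sub _ _ _).symm
  calc ‖(↑u : Completion V) - w‖
      = ‖((n : ℂ))⁻¹‖ * ‖∑ q : ↥K ⧸ L, πt (↑(Quotient.out q) : G) ((↑v : Completion V) - w)‖ := by
        rw [key, norm_smul]
    _ ≤ (n : ℝ)⁻¹ * ∑ q : ↥K ⧸ L, ‖πt (↑(Quotient.out q) : G) ((↑v : Completion V) - w)‖ := by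
        have h1 : ‖((n : ℂ))⁻¹‖ = (n : ℝ)⁻¹ := by
          rw [norm_inv, Complex.norm_natCast]
        rw [h1]
        exact mul_le_mul_of_nonneg_left (norm_sum_le _ _) (by positivity)
    _ ≤ (n : ℝ)⁻¹ * ∑ _q : ↥K ⧸ L, C * ‖(↑v : Completion V) - w‖ := by
        refine mul_le_mul_of_nonneg_left (Finset.sum_le_sum fun q _ => ?_) (by positivity)
        exact hC _ (Quotient.out q).2 _
    _ = C * ‖(↑v : Completion V) - w‖ := by
        rw [Finset.sum_const, Finset.card_univ, ← hn, nsmul_eq_mul, ← mul_assoc,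
          inv_mul_cancel₀ hnR, one_mul]



/-- **Proposition.** Let `G` be a tdlc group and `(π, V)` a smooth admissible representation of
`G`, continuous with respect to a norm on `V`, and let `(π̃, Ṽ)` be the extension of `π` to the
completion `Ṽ` of `V`. Then the space `Ṽ^∞ = ⋃_K Ṽ^K` of smooth vectors of `Ṽ` (the union
running over all compact open subgroups `K ≤ G`) is exactly (the image of) `V`. -/
theorem completion_smooth_vectors
    (π : Representation ℂ G V)
    (hsmooth : IsSmooth π) (hadm : IsAdmissible π)
    (hcont : ∀ v : V, Continuous fun g : G => π g v)
    (πt : G → (Completion V →L[ℂ] Completion V))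
    (hcompat : ∀ (g : G) (v : V), πt g (↑v : Completion V) = (↑(π g v) : Completion V)) :
    {w : Completion V | ∃ K : Subgroup G, IsCompact (K : Set G) ∧ IsOpen (K : Set G) ∧
        ∀ k ∈ K, πt k w = w}
      = Set.range (fun v : V => (↑v : Completion V)) := by
  ext w
  simp only [Set.mem_setOf_eq, Set.mem_range]
  constructor
  · rintro ⟨K, hKc, hKo, hfix⟩
    -- find a smaller compact open subgroup on which `πt` is uniformly bounded
    obtain ⟨K₁, hK₁c, hK₁o, hK₁le, C, hC0, hC⟩ := exists_bound π hcont πt hcompat K hKc hKo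
    have hw : ∀ k ∈ K₁, πt k w = w := fun k hk => hfix k (hK₁le hk)
    -- the image of the fixed vectors in the completion is finite-dimensional, hence closed
    haveI : FiniteDimensional ℂ (fixedSubmodule π K₁) := hadm K₁ hK₁c hK₁o
    set W : Submodule ℂ (Completion V) :=
      (fixedSubmodule π K₁).map (Completion.toComplL (𝕜 := ℂ) (E := V) : V →ₗ[ℂ] Completion V)
      with hW
    haveI : FiniteDimensional ℂ W := Module.Finite.map _ _
    have hWclosed : IsClosed (W : Set (Completion V)) := W.closed_of_finiteDimensional
    have hmem : w ∈ W := by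
      suffices h : w ∈ closure (W : Set (Completion V)) by
        rwa [hWclosed.closure_eq] at h
      rw [Metric.mem_closure_iff]
      intro ε hε
      have hδ : 0 < ε / (C + 1) := by positivity
      obtain ⟨v, hv⟩ := Metric.denseRange_iff.mp Completion.denseRange_coe w (ε / (C + 1)) hδ
      obtain ⟨u, hu, hud⟩ := exists_avg π hsmooth πt hcompat K₁ hK₁c hK₁o hC hw v
      refine ⟨(↑u : Completion V), ⟨u, hu, rfl⟩, ?_⟩
      have h1 : ‖(↑v : Completion V) - w‖ < ε / (C + 1) := by
        rw [← dist_eq_norm, dist_comm]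
        exact hv
      have h2 : C * ‖(↑v : Completion V) - w‖ < ε := by
        calc C * ‖(↑v : Completion V) - w‖ ≤ C * (ε / (C + 1)) := by
              exact mul_le_mul_of_nonneg_left h1.le hC0
          _ < ε := by
              rw [mul_div_assoc']
              rw [div_lt_iff₀ (by linarith)]
              nlinarith
      calc dist w (↑u : Completion V) = ‖(↑u : Completion V) - w‖ := by
            rw [dist_comm, dist_eq_norm]
        _ ≤ C * ‖(↑v : Completion V) - w‖ := hud
        _ < ε := h2
    obtain ⟨u, _, huw⟩ := hmem
    exact ⟨u, by simpa using huw⟩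
  · rintro ⟨v, rfl⟩
    -- the stabiliser of `v` is an open subgroup; find a compact open subgroup inside it
    have hopen : IsOpen {g : G | π g v = v} := hsmooth v
    have h1 : (1 : G) ∈ {g : G | π g v = v} := by simp
    obtain ⟨K, hKc, hKo, hKsub⟩ := exists_compact_open_subgroup hopen h1
    refine ⟨K, hKc, hKo, fun k hk => ?_⟩
    rw [hcompat k v, hKsub hk]

end SmoothRep
end
end
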